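/- Let m > 0, let ξ be a sigmoidal function of class 𝒜(m) with Ψ(x) = ξ(x + m) − ξ(x − m), let a > 0, let n₂ ≥ 1, let F : ℝ² → ℝ, let (x, y) ∈ Δ with x < a, and let ε ≥ 0. If |F(x, u) − F(x, v)| ≤ ε for all u, v ∈ [0, a − x] with |u − v| ≤ (a − x)/n₂, then |(S^y_{n₂} F)(x, y) − F(x, y)| ≤ ε. (In particular, ‖S^y_{n₂} F − F‖ ≤ ω(F(x, ·), h₂) with h₂ = (a − x)/n₂, where ω denotes the modulus of continuity of F in its second variable.) -/

import Mathlib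

theorem Sy_error_bound (m : ℝ) (hm : 0 < m) (ξ : ℝ → ℝ) (hmono : Monotone ξ)
    (hone : ∀ x : ℝ, m ≤ x → ξ x = 1) (hzero : ∀ x : ℝ, x ≤ -m → ξ x = 0)
    (Ψ : ℝ → ℝ) (hΨ : ∀ x : ℝ, Ψ x = ξ (x + m) - ξ (x - m))
    (a : ℝ) (ha : 0 < a) (n₂ : ℕ) (hn₂ : 1 ≤ n₂) (F : ℝ → ℝ → ℝ)
    (x y : ℝ) (hx : 0 ≤ x) (hy : 0 ≤ y) (hxy : x + y ≤ a) (hxa : x < a)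
    (ε : ℝ) (hε : 0 ≤ ε)
    (hmod : ∀ u ∈ Set.Icc (0 : ℝ) (a - x), ∀ v ∈ Set.Icc (0 : ℝ) (a - x),
      |u - v| ≤ (a - x) / n₂ → |F x u - F x v| ≤ ε) :
    |(∑ l ∈ Finset.range (n₂ + 1),
        F x ((l : ℝ) / n₂ * (a - x)) *
          Ψ ((2 * m * n₂ / (a - x)) * (y - (l : ℝ) / n₂ * (a - x)))) - F x y| ≤ ε := by
  have hax0 : 0 < a - x := sub_pos.mpr hxa
  have hn : (0:ℝ) < (n₂:ℝ) := by exact_mod_cast Nat.pos_of_ne_zero (by omega)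
  set c := 2 * m * (n₂:ℝ) / (a - x) with hc
  have hc0 : 0 < c := by positivity
  have hch : c * ((a - x) / n₂) = 2 * m := by
    rw [hc, div_mul_div_comm, div_eq_iff (by positivity)]; ring
  -- basic properties of ξ
  have hxile : ∀ z, ξ z ≤ 1 := by
    intro z
    rcases le_total z m with h | h
    · calc ξ z ≤ ξ m := hmono h
        _ = 1 := hone m le_rfl
    · exact (hone z h).le
  have hxige : ∀ z, 0 ≤ ξ z := by
    intro z
    rcases le_total z (-m) with h | h
    · exact (hzero z h).ge
    · calc (0:ℝ) = ξ (-m) := (hzero _ le_rfl).symm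
        _ ≤ ξ z := hmono h
  have hΨnn : ∀ z, 0 ≤ Ψ z := by
    intro z; rw [hΨ]
    have := hmono (show z - m ≤ z + m by linarith)
    linarith
  have hΨle : ∀ z, Ψ z ≤ 1 := by
    intro z; rw [hΨ]
    have := hxile (z + m); have := hxige (z - m); linarith
  have hΨ0 : ∀ z, 2 * m ≤ |z| → Ψ z = 0 := by
    intro z hz
    rw [hΨ]
    rcases le_abs.mp hz with h | h
    · rw [hone (z + m) (by linarith), hone (z - m) (by linarith)]; ring
    · rw [hzero (z + m) (by linarith), hzero (z - m) (by linarith)]; ring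
  -- the weights sum to 1
  have hsum : ∑ l ∈ Finset.range (n₂ + 1), Ψ (c * (y - (l : ℝ) / n₂ * (a - x))) = 1 := by
    have key : ∀ l ∈ Finset.range (n₂ + 1),
        Ψ (c * (y - (l : ℝ) / n₂ * (a - x)))
          = ξ (c * (y - (l : ℝ) / n₂ * (a - x)) + m)
            - ξ (c * (y - ((l + 1 : ℕ) : ℝ) / n₂ * (a - x)) + m) := by
      intro l _
      rw [hΨ]
      congr 2
      push_cast
      have h1 : ((l : ℝ) + 1) / n₂ * (a - x) = (l : ℝ) / n₂ * (a - x) + (a - x) / n₂ := by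
        field_simp
      rw [h1]
      nlinarith [hch]
    rw [Finset.sum_congr rfl key,
      Finset.sum_range_sub' (fun l => ξ (c * (y - (l : ℝ) / n₂ * (a - x)) + m)) (n₂ + 1)]
    have h0 : ξ (c * (y - ((0 : ℕ) : ℝ) / n₂ * (a - x)) + m) = 1 := by
      apply hone
      push_cast
      rw [zero_div, zero_mul, sub_zero]
      nlinarith [mul_nonneg hc0.le hy]
    have hlast : ξ (c * (y - ((n₂ + 1 : ℕ) : ℝ) / n₂ * (a - x)) + m) = 0 := by
      apply hzero
      push_cast
      have h1 : ((n₂ : ℝ) + 1) / n₂ * (a - x) = (a - x) + (a - x) / n₂ := by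
        field_simp
      rw [h1]
      have hy2 : y - (a - x) ≤ 0 := by linarith
      nlinarith [hch, mul_nonpos_of_nonneg_of_nonpos hc0.le hy2]
    rw [h0, hlast]; ring
  -- rewrite the difference
  have hdiff : (∑ l ∈ Finset.range (n₂ + 1),
        F x ((l : ℝ) / n₂ * (a - x)) * Ψ (c * (y - (l : ℝ) / n₂ * (a - x)))) - F x y
      = ∑ l ∈ Finset.range (n₂ + 1),
          (F x ((l : ℝ) / n₂ * (a - x)) - F x y) * Ψ (c * (y - (l : ℝ) / n₂ * (a - x))) := by
    have h2 : ∑ l ∈ Finset.range (n₂ + 1),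
          (F x ((l : ℝ) / n₂ * (a - x)) - F x y) * Ψ (c * (y - (l : ℝ) / n₂ * (a - x)))
        = (∑ l ∈ Finset.range (n₂ + 1),
            F x ((l : ℝ) / n₂ * (a - x)) * Ψ (c * (y - (l : ℝ) / n₂ * (a - x))))
          - F x y * ∑ l ∈ Finset.range (n₂ + 1), Ψ (c * (y - (l : ℝ) / n₂ * (a - x))) := by
      rw [Finset.mul_sum, ← Finset.sum_sub_distrib]
      apply Finset.sum_congr rfl
      intro l _; ring
    rw [h2, hsum, mul_one]
  -- per-term bound
  have hterm : ∀ l ∈ Finset.range (n₂ + 1),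
      |(F x ((l : ℝ) / n₂ * (a - x)) - F x y) * Ψ (c * (y - (l : ℝ) / n₂ * (a - x)))|
        ≤ ε * Ψ (c * (y - (l : ℝ) / n₂ * (a - x))) := by
    intro l hl
    have hln : (l : ℝ) ≤ (n₂ : ℝ) := by
      exact_mod_cast Nat.lt_succ_iff.mp (Finset.mem_range.mp hl)
    set yl := (l : ℝ) / n₂ * (a - x) with hyl
    rw [abs_mul, abs_of_nonneg (hΨnn _)]
    by_cases hclose : |yl - y| ≤ (a - x) / n₂
    · apply mul_le_mul_of_nonneg_right _ (hΨnn _)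
      apply hmod
      · constructor
        · positivity
        · rw [hyl]
          rw [div_mul_eq_mul_div, div_le_iff₀ hn]
          nlinarith
      · exact ⟨hy, by linarith⟩
      · exact hclose
    · have h2m : Ψ (c * (y - yl)) = 0 := by
        apply hΨ0
        rw [abs_mul, abs_of_pos hc0]
        have : (a - x) / n₂ ≤ |y - yl| := by
          rw [abs_sub_comm]; linarith [(not_le.mp hclose).le]
        nlinarith [abs_nonneg (y - yl)]
      rw [h2m]
      simp
  calc |(∑ l ∈ Finset.range (n₂ + 1),
        F x ((l : ℝ) / n₂ * (a - x)) * Ψ (c * (y - (l : ℝ) / n₂ * (a - x)))) - F x y|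
      = |∑ l ∈ Finset.range (n₂ + 1),
          (F x ((l : ℝ) / n₂ * (a - x)) - F x y) * Ψ (c * (y - (l : ℝ) / n₂ * (a - x)))| := by
        rw [hdiff]
    _ ≤ ∑ l ∈ Finset.range (n₂ + 1),
          |(F x ((l : ℝ) / n₂ * (a - x)) - F x y) * Ψ (c * (y - (l : ℝ) / n₂ * (a - x)))| :=
        Finset.abs_sum_le_sum_abs _ _
    _ ≤ ∑ l ∈ Finset.range (n₂ + 1), ε * Ψ (c * (y - (l : ℝ) / n₂ * (a - x))) :=
        Finset.sum_le_sum hterm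
    _ = ε := by rw [← Finset.mul_sum, hsum, mul_one]
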